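/- Let f : ℝ^n → Δ^n be continuous and let E : ℝ^n → ℝ be differentiable. Suppose that for every initial state q⁰ ∈ ℝ^n, every continuous payoff stream p : [0,∞) → ℝ^n, and every t ≥ 0, E(q(t)) = E(q⁰) + ∫₀ᵗ ⟨f(q(τ)), p(τ)⟩ dτ, where q(t) = q⁰ + ∫₀ᵗ p(τ) dτ. Then ∇E(q) = f(q) for every q ∈ ℝ^n; in particular ∇E(q) ∈ Δ^n, i.e. ∇E(q) has nonnegative entries and ⟨∇E(q), 𝟙⟩ = 1, for every q. -/

import Mathlib

/- STATEMENT 7: If a continuous conversion function f : ℝⁿ → Δⁿ together with a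
differentiable storage function E satisfies the lossless identity
E(q(t)) = E(q⁰) + ∫₀ᵗ ⟨f(q(τ)), p(τ)⟩ dτ for all initial states, continuous payoff
streams and times t ≥ 0, then ∇E(q) = f(q) for every q; in particular ∇E(q) ∈ Δⁿ. -/

open scoped BigOperators RealInnerProductSpace
open MeasureTheory

noncomputable section

abbrev Vec (n : ℕ) := EuclideanSpace ℝ (Fin n)

/-- The standard probability simplex in ℝⁿ. -/
def simplex (n : ℕ) : Set (Vec n) := {x | (∀ j, 0 ≤ x j) ∧ ∑ j, x j = 1}

/-- The all-ones vector 𝟙 ∈ ℝⁿ. -/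
def ones (n : ℕ) : Vec n := WithLp.toLp 2 (fun _ => 1)

theorem lossless_storage_gradient_eq_conversion
    (n : ℕ) (f : Vec n → Vec n) (hfc : Continuous f) (hf : ∀ q, f q ∈ simplex n)
    (E : Vec n → ℝ) (hE : Differentiable ℝ E)
    (hloss : ∀ (q0 : Vec n) (p : ℝ → Vec n), Continuous p → ∀ t : ℝ, 0 ≤ t →
      E (q0 + ∫ τ in (0:ℝ)..t, p τ) = E q0 +
        ∫ τ in (0:ℝ)..t, ⟪f (q0 + ∫ σ in (0:ℝ)..τ, p σ), p τ⟫) :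
    ∀ q : Vec n, gradient E q = f q ∧
      (∀ j, 0 ≤ gradient E q j) ∧ ⟪gradient E q, ones n⟫ = 1 := by
  intro q
  have key : gradient E q = f q := by
    apply ext_inner_right ℝ
    intro v
    -- derivative of t ↦ E (q + t • v) at 0
    have hline : HasDerivAt (fun t : ℝ => q + t • v) v 0 := by
      simpa using ((hasDerivAt_id (0:ℝ)).smul_const v).const_add q
    have hgrad := (hE q).hasGradientAt
    have h1 : HasDerivAt (fun t : ℝ => E (q + t • v)) ⟪gradient E q, v⟫ 0 := by
      have hg' : HasFDerivAt E ((InnerProductSpace.toDual ℝ (Vec n)) (gradient E q))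
          ((fun t : ℝ => q + t • v) 0) := by simpa using hgrad.hasFDerivAt
      have h' := hg'.comp_hasDerivAt 0 hline
      simpa [InnerProductSpace.toDual_apply_apply, Function.comp_def] using h'
    -- derivative of the integral side
    have hcont : Continuous (fun τ : ℝ => ⟪f (q + τ • v), v⟫) := by
      exact (hfc.comp (continuous_const.add (continuous_id.smul continuous_const))).inner
        continuous_const
    have h2 : HasDerivAt (fun t : ℝ => E q + ∫ τ in (0:ℝ)..t, ⟪f (q + τ • v), v⟫)
        ⟪f q, v⟫ 0 := by
      have := intervalIntegral.integral_hasDerivAt_right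
        ((hcont.intervalIntegrable 0 0)) (hcont.stronglyMeasurableAtFilter _ _)
        hcont.continuousAt
      simpa using this.const_add (E q)
    -- the two functions agree on Ici 0
    have heq : ∀ t ∈ Set.Ici (0:ℝ),
        E q + ∫ τ in (0:ℝ)..t, ⟪f (q + τ • v), v⟫ = E (q + t • v) := by
      intro t ht
      have := hloss q (fun _ => v) continuous_const t ht
      simpa [intervalIntegral.integral_const] using this.symm
    have hB : HasDerivWithinAt (fun t : ℝ => E (q + t • v)) ⟪f q, v⟫ (Set.Ici 0) 0 :=
      (h2.hasDerivWithinAt).congr (fun t ht => (heq t ht).symm) (heq 0 Set.self_mem_Ici).symm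
    have hA : HasDerivWithinAt (fun t : ℝ => E (q + t • v)) ⟪gradient E q, v⟫ (Set.Ici 0) 0 :=
      h1.hasDerivWithinAt
    exact (uniqueDiffOn_Ici (0:ℝ) 0 Set.self_mem_Ici).eq_deriv _ hA hB
  refine ⟨key, ?_, ?_⟩
  · intro j; rw [key]; exact (hf q).1 j
  · rw [key]
    have hsum := (hf q).2
    simp [PiLp.inner_apply, ones, RCLike.inner_apply, hsum]
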